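/- An ideal Q of a commutative semiring R is k-semiprime if and only if Q is a k-ideal and a semiprime ideal of R, i.e., Q is a proper k-ideal such that for every ideal I of R (not necessarily a k-ideal), I² ⊆ Q implies I ⊆ Q. -/
import Mathlib


variable {R : Type*} [CommSemiring R]

/-- An ideal `I` of a commutative semiring is a *k-ideal* (subtractive ideal) if
`a ∈ I` and `a + b ∈ I` imply `b ∈ I`. -/
def IsKIdeal (I : Ideal R) : Prop :=
  ∀ a b : R, a ∈ I → a + b ∈ I → b ∈ I

/-- A *k-semiprime* ideal: a proper k-ideal `Q` such that for every k-ideal `I`,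
`I * I ≤ Q` implies `I ≤ Q`. -/
def IsKSemiprime (Q : Ideal R) : Prop :=
  IsKIdeal Q ∧ Q ≠ ⊤ ∧ ∀ I : Ideal R, IsKIdeal I → I * I ≤ Q → I ≤ Q

/-- The k-closure of an ideal: all `x` such that `x + a ∈ I` for some `a ∈ I`. -/
def kClosure (I : Ideal R) : Ideal R where
  carrier := {x | ∃ a ∈ I, x + a ∈ I}
  zero_mem' := ⟨0, I.zero_mem, by simpa using I.zero_mem⟩
  add_mem' := by
    rintro x y ⟨a, ha, hxa⟩ ⟨b, hb, hyb⟩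
    exact ⟨a + b, I.add_mem ha hb, by
      have : (x + a) + (y + b) ∈ I := I.add_mem hxa hyb
      convert this using 1; ring⟩
  smul_mem' := by
    rintro r x ⟨a, ha, hxa⟩
    exact ⟨r * a, I.mul_mem_left r ha, by
      have : r * (x + a) ∈ I := I.mul_mem_left r hxa
      simpa [mul_add] using this⟩

lemma le_kClosure (I : Ideal R) : I ≤ kClosure I :=
  fun x hx => ⟨0, I.zero_mem, by simpa using hx⟩

lemma isKIdeal_kClosure (I : Ideal R) : IsKIdeal (kClosure I) := by
  rintro x y ⟨a, ha, hxa⟩ ⟨c, hc, hxyc⟩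
  refine ⟨x + a + c, I.add_mem hxa hc, ?_⟩
  have : (x + y + c) + a ∈ I := I.add_mem hxyc ha
  convert this using 1; ring

/-- An ideal `Q` is k-semiprime if and only if it is a k-ideal and a semiprime ideal,
i.e. a proper ideal such that `I² ⊆ Q` implies `I ⊆ Q` for every ideal `I`. -/
theorem isKSemiprime_iff (Q : Ideal R) :
    IsKSemiprime Q ↔
      IsKIdeal Q ∧ Q ≠ ⊤ ∧ ∀ I : Ideal R, I * I ≤ Q → I ≤ Q := by
  constructor
  · rintro ⟨hk, hne, hsp⟩
    refine ⟨hk, hne, fun I hII => ?_⟩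
    have hKK : kClosure I * kClosure I ≤ Q := by
      rw [Ideal.mul_le]
      rintro x ⟨a, ha, hxa⟩ y ⟨c, hc, hyc⟩
      have hsq : ∀ u ∈ I, ∀ v ∈ I, u * v ∈ Q := Ideal.mul_le.mp hII
      have hac : a * c ∈ Q := hsq a ha c hc
      have hxc : x * c ∈ Q := by
        have : a * c + x * c ∈ Q := by
          have := hsq (x + a) hxa c hc
          convert this using 1; ring
        exact hk _ _ hac this
      have hay : a * y ∈ Q := by
        have : a * c + a * y ∈ Q := by
          have := hsq a ha (y + c) hyc
          convert this using 1; ring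
        exact hk _ _ hac this
      have hrest : x * c + a * y + a * c ∈ Q := Q.add_mem (Q.add_mem hxc hay) hac
      have hbd : (x + a) * (y + c) ∈ Q := hsq _ hxa _ hyc
      have : (x * c + a * y + a * c) + x * y ∈ Q := by
        convert hbd using 1; ring
      exact hk _ _ hrest this
    exact le_trans (le_kClosure I) (hsp _ (isKIdeal_kClosure I) hKK)
  · rintro ⟨hk, hne, hsp⟩
    exact ⟨hk, hne, fun I _ hII => hsp I hII⟩
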